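/- For every δ > 0 one has C_3(m) ≪_δ m^{3+δ} for all integers m ≥ 1. -/

import Mathlib

open Finset Filter

noncomputable section

/-- `S ℓ p = ∑_{n ≤ ℓ} (n/p)`, the quadratic character sum (Legendre symbol for odd prime `p`). -/
def S (ℓ p : ℕ) : ℤ := ∑ n ∈ Finset.Icc 1 ℓ, jacobiSym (n : ℤ) p

/-- the first-passage time `f_ε(p) = min {ℓ ≥ 1 : S_ℓ(p) < ε ℓ}`. -/
def fpt (ε : ℝ) (p : ℕ) : ℕ := sInf {ℓ : ℕ | 1 ≤ ℓ ∧ ((S ℓ p : ℝ)) < ε * ℓ}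

/-- the odd primes up to a real number `x`. -/
def oddPrimesUpTo (x : ℝ) : Finset ℕ :=
  (Finset.range (⌊x⌋₊ + 1)).filter (fun p => p.Prime ∧ p ≠ 2)

/-- `π_odd(x)`, the number of odd primes up to `x`. -/
def piOdd (x : ℝ) : ℕ := (oddPrimesUpTo x).card

/-- `P_ℓ(x)`, the density of odd primes `p ≤ x` with `S_ℓ(p) ≥ ε ℓ`. -/
def Pdens (ε : ℝ) (ℓ : ℕ) (x : ℝ) : ℝ :=
  (((oddPrimesUpTo x).filter (fun p => ε * ℓ ≤ (S ℓ p : ℝ))).card : ℝ) / (piOdd x : ℝ)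

/-- `a_m(x) = N_m(x)/π_odd(x)`, the proportion of odd primes `p ≤ x` with `f_ε(p) > m`. -/
def aCoef (ε : ℝ) (m : ℕ) (x : ℝ) : ℝ :=
  (((oddPrimesUpTo x).filter (fun p => m < fpt ε p)).card : ℝ) / (piOdd x : ℝ)

/-- `c_u(ℓ)`, the number of triples `(a,b,c) ∈ {1,…,ℓ}³` with `abc = u`. -/
def cCoef (ℓ u : ℕ) : ℕ :=
  ((Finset.Icc 1 ℓ ×ˢ Finset.Icc 1 ℓ ×ˢ Finset.Icc 1 ℓ).filter
    (fun t => t.1 * t.2.1 * t.2.2 = u)).card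

/-- `C_3(ℓ) = ∑_{u,v ≤ ℓ³, uv = □} c_u(ℓ) c_v(ℓ)`. -/
def C3 (ℓ : ℕ) : ℕ :=
  ∑ q ∈ (Finset.Icc 1 (ℓ ^ 3) ×ˢ Finset.Icc 1 (ℓ ^ 3)).filter (fun q => IsSquare (q.1 * q.2)),
    cCoef ℓ q.1 * cCoef ℓ q.2


-- auxiliary lemmas ----------------------------------------------------------

lemma aux_divisor_bound (ε : ℝ) (hε : 0 < ε) :
    ∃ C : ℝ, 1 ≤ C ∧ ∀ n : ℕ, 1 ≤ n → (n.divisors.card : ℝ) ≤ C * (n : ℝ) ^ ε := by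
  set L : ℝ := ε * Real.log 2 with hL
  have hL0 : 0 < L := by
    have := Real.log_pos (by norm_num : (1:ℝ) < 2)
    positivity
  set B : ℝ := 1 / L + 1 with hBdef
  have hB1 : 1 ≤ B := by
    have h : 0 < 1 / L := by positivity
    rw [hBdef]; linarith
  set T : ℕ := ⌈(2:ℝ) ^ (1/ε)⌉₊ with hT
  refine ⟨B ^ T, one_le_pow₀ hB1, ?_⟩
  intro n hn
  have hn0 : n ≠ 0 := by omega
  -- key per-prime bound
  have key : ∀ p ∈ n.primeFactors,
      ((n.factorization p + 1 : ℕ) : ℝ) ≤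
        (if p < T then B else 1) * ((p : ℝ) ^ (n.factorization p : ℕ)) ^ ε := by
    intro p hp
    have hpp : p.Prime := Nat.prime_of_mem_primeFactors hp
    have hp2 : (2 : ℝ) ≤ (p : ℝ) := by exact_mod_cast hpp.two_le
    set e : ℕ := n.factorization p with he
    have hpe : ((p:ℝ) ^ e) ^ ε = ((p:ℝ) ^ ε) ^ e := by
      rw [← Real.rpow_natCast (p:ℝ) e, ← Real.rpow_mul (by linarith),
        mul_comm, Real.rpow_mul (by linarith), Real.rpow_natCast]
    by_cases hsmall : p < T
    · simp only [if_pos hsmall]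
      have h2e : ((2:ℝ) ^ e) ^ ε ≤ ((p:ℝ) ^ e) ^ ε := by
        apply Real.rpow_le_rpow (by positivity)
        · exact pow_le_pow_left₀ (by norm_num) hp2 e
        · exact le_of_lt hε
      have h2exp : ((2:ℝ) ^ e) ^ ε = Real.exp ((e : ℝ) * L) := by
        rw [← Real.rpow_natCast (2:ℝ) e, ← Real.rpow_mul (by norm_num),
          Real.rpow_def_of_pos (by norm_num), hL]
        ring_nf
      have hexp : 1 + (e : ℝ) * L ≤ ((2:ℝ) ^ e) ^ ε := by
        rw [h2exp]
        have := Real.add_one_le_exp ((e:ℝ) * L)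
        linarith
      have hBe : ((e : ℕ) + 1 : ℝ) ≤ B * (1 + (e : ℝ) * L) := by
        rw [hBdef]
        have he0 : (0:ℝ) ≤ (e:ℝ) := by positivity
        have h1L : 0 < 1/L := by positivity
        have : 1/L * ((e:ℝ) * L) = (e:ℝ) := by field_simp
        nlinarith
      calc ((e + 1 : ℕ) : ℝ) = (e : ℝ) + 1 := by push_cast; ring
        _ ≤ B * (1 + (e:ℝ) * L) := by push_cast at hBe ⊢; linarith
        _ ≤ B * (((2:ℝ) ^ e) ^ ε) := by
            apply mul_le_mul_of_nonneg_left hexp (by linarith)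
        _ ≤ B * (((p:ℝ) ^ e) ^ ε) := by
            apply mul_le_mul_of_nonneg_left h2e (by linarith)
    · simp only [if_neg hsmall, one_mul]
      have hpT : (T : ℝ) ≤ (p : ℝ) := by exact_mod_cast Nat.le_of_not_lt hsmall
      have hceil : (2:ℝ) ^ (1/ε) ≤ (T : ℝ) := Nat.le_ceil _
      have hp2eps : (2 : ℝ) ≤ (p : ℝ) ^ ε := by
        have h1 : ((2:ℝ) ^ (1/ε)) ^ ε ≤ (p : ℝ) ^ ε :=
          Real.rpow_le_rpow (by positivity) (hceil.trans hpT) (le_of_lt hε)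
        rwa [← Real.rpow_mul (by norm_num), one_div_mul_cancel hε.ne', Real.rpow_one] at h1
      have h2e : ((e : ℕ) + 1 : ℝ) ≤ (2:ℝ) ^ e := by
        have := Nat.lt_two_pow_self (n := e)
        exact_mod_cast Nat.succ_le_of_lt this
      calc ((e + 1 : ℕ) : ℝ) ≤ (2:ℝ) ^ e := by push_cast at h2e ⊢; linarith
        _ ≤ ((p:ℝ) ^ ε) ^ e := pow_le_pow_left₀ (by norm_num) hp2eps e
        _ = ((p:ℝ) ^ e) ^ ε := hpe.symm
  -- assemble
  have hd : (n.divisors.card : ℝ) = ∏ p ∈ n.primeFactors, ((n.factorization p + 1 : ℕ) : ℝ) := by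
    rw [Nat.card_divisors hn0]; push_cast; ring
  have hprod_le : (n.divisors.card : ℝ) ≤
      ∏ p ∈ n.primeFactors, ((if p < T then B else 1) * ((p : ℝ) ^ (n.factorization p : ℕ)) ^ ε) := by
    rw [hd]
    apply Finset.prod_le_prod
    · intro p _; positivity
    · exact key
  have hsplit : ∏ p ∈ n.primeFactors, ((if p < T then B else 1) * ((p : ℝ) ^ (n.factorization p : ℕ)) ^ ε)
      = (∏ p ∈ n.primeFactors, (if p < T then B else 1)) *
        ∏ p ∈ n.primeFactors, ((p : ℝ) ^ (n.factorization p : ℕ)) ^ ε :=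
    Finset.prod_mul_distrib
  have hite : (∏ p ∈ n.primeFactors, (if p < T then B else 1)) ≤ B ^ T := by
    rw [Finset.prod_ite, Finset.prod_const, Finset.prod_const, one_pow, mul_one]
    have hsub : n.primeFactors.filter (fun p => p < T) ⊆ Finset.range T := by
      intro x hx
      simp only [Finset.mem_filter] at hx
      exact Finset.mem_range.2 hx.2
    have hcard : (n.primeFactors.filter (fun p => p < T)).card ≤ T := by
      simpa using Finset.card_le_card hsub
    exact pow_le_pow_right₀ hB1 hcard
  have hn_prod : ∏ p ∈ n.primeFactors, ((p : ℝ) ^ (n.factorization p : ℕ)) ^ ε = (n : ℝ) ^ ε := by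
    rw [Real.finset_prod_rpow _ _ (fun i _ => by positivity)]
    congr 1
    have h : ∏ i ∈ n.primeFactors, i ^ n.factorization i = n := by
      rw [← Nat.support_factorization]
      exact Nat.factorization_prod_pow_eq_self hn0
    conv_rhs => rw [← h]
    push_cast
    ring
  have hfin : (n.divisors.card : ℝ) ≤ B ^ T * (n : ℝ) ^ ε := by
    calc (n.divisors.card : ℝ) ≤ _ := hprod_le
      _ = _ := hsplit
      _ ≤ B ^ T * (n : ℝ) ^ ε := by
          rw [hn_prod]
          exact mul_le_mul_of_nonneg_right hite (by positivity)
  exact hfin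

def T3 (m : ℕ) : Finset (ℕ × ℕ × ℕ) := Finset.Icc 1 m ×ˢ Finset.Icc 1 m ×ˢ Finset.Icc 1 m

def pr3 (t : ℕ × ℕ × ℕ) : ℕ := t.1 * t.2.1 * t.2.2

def bigSet (m : ℕ) : Finset ((ℕ × ℕ × ℕ) × (ℕ × ℕ × ℕ)) :=
  (T3 m ×ˢ T3 m).filter (fun p => IsSquare (pr3 p.1 * pr3 p.2))

lemma mem_T3 {m : ℕ} {t : ℕ × ℕ × ℕ} (h : t ∈ T3 m) : pr3 t ∈ Finset.Icc 1 (m ^ 3) := by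
  simp only [T3, Finset.mem_product, Finset.mem_Icc] at h
  obtain ⟨⟨h1, h2⟩, ⟨h3, h4⟩, h5, h6⟩ := h
  simp only [pr3, Finset.mem_Icc]
  refine ⟨Nat.one_le_iff_ne_zero.2 (by positivity), ?_⟩
  have : t.1 * t.2.1 * t.2.2 ≤ m * m * m := Nat.mul_le_mul (Nat.mul_le_mul h2 h4) h6
  calc t.1 * t.2.1 * t.2.2 ≤ m * m * m := this
    _ = m ^ 3 := by ring

lemma cCoef_eq (m u : ℕ) : cCoef m u = ((T3 m).filter (fun t => pr3 t = u)).card := rfl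

lemma C3_eq_card (m : ℕ) : C3 m = (bigSet m).card := by
  rw [C3, Finset.card_eq_sum_card_fiberwise
    (f := fun p => (pr3 p.1, pr3 p.2))
    (t := (Finset.Icc 1 (m ^ 3) ×ˢ Finset.Icc 1 (m ^ 3)).filter (fun q => IsSquare (q.1 * q.2)))]
  · apply Finset.sum_congr rfl
    intro q hq
    simp only [Finset.mem_filter, Finset.mem_product] at hq
    obtain ⟨⟨hq1, hq2⟩, hqsq⟩ := hq
    rw [cCoef_eq, cCoef_eq, ← Finset.card_product]
    congr 1
    ext p
    simp only [bigSet, Finset.mem_filter, Finset.mem_product, Prod.ext_iff]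
    constructor
    · intro h
      have he1 : pr3 p.1 = q.1 := by tauto
      have he2 : pr3 p.2 = q.2 := by tauto
      have hs : IsSquare (pr3 p.1 * pr3 p.2) := by rw [he1, he2]; exact hqsq
      tauto
    · intro h
      have he1 : pr3 p.1 = q.1 := by tauto
      have he2 : pr3 p.2 = q.2 := by tauto
      have hs : IsSquare (pr3 p.1 * pr3 p.2) := by rw [he1, he2]; exact hqsq
      tauto
  · intro p hp
    simp only [bigSet, Finset.mem_coe, Finset.mem_filter, Finset.mem_product] at hp
    obtain ⟨⟨hp1, hp2⟩, hsq⟩ := hp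
    simp only [Finset.mem_coe, Finset.mem_filter, Finset.mem_product]
    exact ⟨⟨mem_T3 hp1, mem_T3 hp2⟩, hsq⟩

lemma bigSet_card_le (m : ℕ) :
    (bigSet m).card ≤ ∑ k ∈ Finset.Icc 1 (m ^ 3), ((k ^ 2).divisors.card) ^ 5 := by
  rw [Finset.card_eq_sum_card_fiberwise
    (f := fun p => Nat.sqrt (pr3 p.1 * pr3 p.2)) (t := Finset.Icc 1 (m ^ 3))]
  · apply Finset.sum_le_sum
    intro k hk
    simp only [Finset.mem_Icc] at hk
    have hk2 : k ^ 2 ≠ 0 := by have := hk.1; positivity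
    set D := (k ^ 2).divisors with hD
    have hcard : (D ×ˢ D ×ˢ D ×ˢ D ×ˢ D).card = D.card ^ 5 := by
      simp [Finset.card_product]; ring
    rw [← hcard]
    apply Finset.card_le_card_of_injOn
      (fun p => (p.1.1, p.1.2.1, p.1.2.2, p.2.1, p.2.2.1))
    · rintro ⟨⟨a, b, c⟩, d, e, f⟩ hp
      simp only [Finset.mem_coe, Finset.mem_filter, bigSet, Finset.mem_product] at hp
      obtain ⟨⟨⟨hp1, hp2⟩, hsq⟩, hsqrt⟩ := hp
      obtain ⟨r, hr⟩ := hsq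
      have hrk : r = k := by rw [hr, Nat.sqrt_eq] at hsqrt; exact hsqrt
      have hw : a * b * c * (d * e * f) = k ^ 2 := by
        have : pr3 (a, b, c) * pr3 (d, e, f) = k ^ 2 := by rw [hr, hrk]; ring
        simpa [pr3] using this
      simp only [Finset.mem_coe, Finset.mem_product, hD, Nat.mem_divisors]
      refine ⟨⟨?_, hk2⟩, ⟨?_, hk2⟩, ⟨?_, hk2⟩, ⟨?_, hk2⟩, ⟨?_, hk2⟩⟩ <;> rw [← hw]
      · exact Dvd.dvd.mul_right (Dvd.dvd.mul_right (dvd_mul_right a b) c) _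
      · exact Dvd.dvd.mul_right (Dvd.dvd.mul_right (dvd_mul_left b a) c) _
      · exact Dvd.dvd.mul_right (dvd_mul_left c (a * b)) _
      · exact Dvd.dvd.mul_left (Dvd.dvd.mul_right (dvd_mul_right d e) f) _
      · exact Dvd.dvd.mul_left (Dvd.dvd.mul_right (dvd_mul_left e d) f) _
    · rintro ⟨⟨a, b, c⟩, d, e, f⟩ hp ⟨⟨a', b', c'⟩, d', e', f'⟩ hp' heq
      simp only [Finset.mem_coe, Finset.mem_filter, bigSet, Finset.mem_product] at hp hp'
      obtain ⟨⟨⟨hp1, hp2⟩, hsq⟩, hsqrt⟩ := hp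
      obtain ⟨⟨⟨hp1', hp2'⟩, hsq'⟩, hsqrt'⟩ := hp'
      obtain ⟨r, hr⟩ := hsq
      obtain ⟨r', hr'⟩ := hsq'
      have hw : a * b * c * (d * e * f) = k ^ 2 := by
        have hrk : r = k := by rw [hr, Nat.sqrt_eq] at hsqrt; exact hsqrt
        have : pr3 (a, b, c) * pr3 (d, e, f) = k ^ 2 := by rw [hr, hrk]; ring
        simpa [pr3] using this
      have hw' : a' * b' * c' * (d' * e' * f') = k ^ 2 := by
        have hrk' : r' = k := by rw [hr', Nat.sqrt_eq] at hsqrt'; exact hsqrt'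
        have : pr3 (a', b', c') * pr3 (d', e', f') = k ^ 2 := by rw [hr', hrk']; ring
        simpa [pr3] using this
      simp only [Prod.mk.injEq] at heq
      obtain ⟨e1, e2, e3, e4, e5⟩ := heq
      subst e1; subst e2; subst e3; subst e4; subst e5
      simp only [T3, Finset.mem_product, Finset.mem_Icc] at hp1 hp2
      have hpos : 0 < a * b * c * (d * e) := by
        obtain ⟨⟨h1, _⟩, ⟨h3, _⟩, h5, _⟩ := hp1
        obtain ⟨⟨g1, _⟩, ⟨g3, _⟩, _⟩ := hp2
        positivity
      have hff : a * b * c * (d * e) * f = a * b * c * (d * e) * f' := by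
        calc a * b * c * (d * e) * f = a * b * c * (d * e * f) := by ring
          _ = a * b * c * (d * e * f') := hw.trans hw'.symm
          _ = a * b * c * (d * e) * f' := by ring
      have : f = f' := Nat.eq_of_mul_eq_mul_left hpos hff
      simp [this]
  · intro p hp
    simp only [bigSet, Finset.mem_coe, Finset.mem_filter, Finset.mem_product] at hp
    obtain ⟨⟨hp1, hp2⟩, hsq⟩ := hp
    have h1 := mem_T3 hp1
    have h2 := mem_T3 hp2
    simp only [Finset.mem_coe, Finset.mem_Icc] at h1 h2 ⊢
    obtain ⟨r, hr⟩ := hsq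
    rw [hr, Nat.sqrt_eq]
    constructor
    · rcases Nat.eq_zero_or_pos r with h | h
      · exfalso; rw [h] at hr; simp at hr; omega
      · exact h
    · nlinarith [h1.2, h2.2, hr]

/-- For every `δ > 0` one has `C_3(m) ≪_δ m^(3+δ)` for all `m ≥ 1`. -/
theorem stmt2 (δ : ℝ) (hδ : 0 < δ) :
    ∃ C : ℝ, 0 < C ∧ ∀ m : ℕ, 1 ≤ m → (C3 m : ℝ) ≤ C * (m : ℝ) ^ ((3 : ℝ) + δ) := by
  obtain ⟨C, hC1, hC⟩ := aux_divisor_bound (δ / 30) (by linarith)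
  refine ⟨C ^ 5, by positivity, ?_⟩
  intro m hm
  have hm0 : (0 : ℝ) < (m : ℝ) := by exact_mod_cast hm
  have h1 : (C3 m : ℝ) ≤ ∑ k ∈ Finset.Icc 1 (m ^ 3), ((k ^ 2).divisors.card : ℝ) ^ 5 := by
    have := bigSet_card_le m
    rw [← C3_eq_card] at this
    calc (C3 m : ℝ) ≤ ((∑ k ∈ Finset.Icc 1 (m ^ 3), ((k ^ 2).divisors.card) ^ 5 : ℕ) : ℝ) := by
          exact_mod_cast this
      _ = _ := by push_cast; rfl
  set B : ℝ := (C * (m : ℝ) ^ ((6 : ℝ) * (δ / 30))) ^ 5 with hB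
  have h2 : ∀ k ∈ Finset.Icc 1 (m ^ 3), ((k ^ 2).divisors.card : ℝ) ^ 5 ≤ B := by
    intro k hk
    simp only [Finset.mem_Icc] at hk
    have hk1 : 1 ≤ k ^ 2 := by nlinarith [hk.1]
    have hd := hC (k ^ 2) hk1
    have hkm : ((k ^ 2 : ℕ) : ℝ) ≤ (m : ℝ) ^ (6 : ℝ) := by
      have h6 : (m : ℝ) ^ (6 : ℝ) = ((m : ℝ) ^ (6 : ℕ)) := Real.rpow_natCast (m : ℝ) 6
      rw [h6]
      have : (k : ℝ) ≤ (m : ℝ) ^ 3 := by exact_mod_cast hk.2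
      push_cast
      nlinarith [hk.1, (Nat.cast_pos (α := ℝ)).2 hk.1]
    have hstep : ((k ^ 2 : ℕ) : ℝ) ^ (δ / 30) ≤ (m : ℝ) ^ ((6 : ℝ) * (δ / 30)) := by
      rw [Real.rpow_mul hm0.le]
      exact Real.rpow_le_rpow (by positivity) hkm (by linarith)
    have hdd : ((k ^ 2).divisors.card : ℝ) ≤ C * (m : ℝ) ^ ((6 : ℝ) * (δ / 30)) := by
      refine hd.trans ?_
      exact mul_le_mul_of_nonneg_left hstep (by linarith)
    rw [hB]
    exact pow_le_pow_left₀ (by positivity) hdd 5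
  have h3 : ∑ k ∈ Finset.Icc 1 (m ^ 3), ((k ^ 2).divisors.card : ℝ) ^ 5 ≤ (m ^ 3 : ℕ) * B := by
    calc ∑ k ∈ Finset.Icc 1 (m ^ 3), ((k ^ 2).divisors.card : ℝ) ^ 5
        ≤ (Finset.Icc 1 (m ^ 3)).card • B := Finset.sum_le_card_nsmul _ _ B h2
      _ = (m ^ 3 : ℕ) * B := by
          rw [Nat.card_Icc]
          simp [nsmul_eq_mul]
  have h4 : ((m ^ 3 : ℕ) : ℝ) * B = C ^ 5 * (m : ℝ) ^ ((3 : ℝ) + δ) := by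
    rw [hB, mul_pow, ← Real.rpow_natCast ((m:ℝ) ^ ((6:ℝ) * (δ/30))) 5, ← Real.rpow_mul hm0.le]
    have hc : ((m ^ 3 : ℕ) : ℝ) = (m : ℝ) ^ ((3 : ℝ)) := by
      push_cast
      rw [← Real.rpow_natCast (m : ℝ) 3]
      norm_num
    rw [hc]
    have : (6 : ℝ) * (δ / 30) * (5 : ℕ) = δ := by push_cast; ring
    rw [this, Real.rpow_add hm0]
    ring
  calc (C3 m : ℝ) ≤ _ := h1
    _ ≤ _ := h3
    _ = _ := h4


end
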